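/- A formal power series Σ_k a_k t^k with real coefficients has infinite radius of convergence if and only if for every sequence (r_k) of positive reals satisfying r_k r_ℓ ≥ r_{k+ℓ} and r_k ρ^k → 0 for some ρ > 0, and for every δ > 0, the sequence (a_k r_k δ^k) is bounded. -/

import Mathlib

open Filter

/-- A power series `Σ a_k t^k` has infinite radius of convergence (converges for
every real `t`) iff for every positive submultiplicative sequence `(r_k)` with
`r_k ρ^k → 0` for some `ρ > 0` and every `δ > 0`, the sequence `(a_k r_k δ^k)`
is bounded. -/
theorem radius_infinite_iff_test_sequences (a : ℕ → ℝ) :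
    (∀ t : ℝ, Summable (fun k : ℕ => a k * t ^ k)) ↔
      (∀ r : ℕ → ℝ, (∀ k, 0 < r k) → (∀ k l : ℕ, r (k + l) ≤ r k * r l) →
        (∃ ρ > (0 : ℝ), Tendsto (fun k : ℕ => r k * ρ ^ k) atTop (nhds 0)) →
        ∀ δ > (0 : ℝ), ∃ C : ℝ, ∀ k : ℕ, |a k * r k * δ ^ k| ≤ C) := by
  constructor
  · rintro h r hr hsub ⟨ρ, hρ, hlim⟩ δ hδ
    obtain ⟨M, hM⟩ : ∃ M, ∀ k, r k * ρ ^ k ≤ M := by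
      obtain ⟨M, hM⟩ := hlim.bddAbove_range
      exact ⟨M, fun k => hM ⟨k, rfl⟩⟩
    have hM0 : 0 ≤ M := le_trans (by simpa using (hr 0).le) (hM 0)
    have hs : Tendsto (fun k : ℕ => |a k * (δ / ρ) ^ k|) atTop (nhds 0) := by
      simpa using (h (δ / ρ)).tendsto_atTop_zero.abs
    obtain ⟨C, hC⟩ : ∃ C, ∀ k, |a k * (δ / ρ) ^ k| ≤ C := by
      obtain ⟨C, hC⟩ := hs.bddAbove_range
      exact ⟨C, fun k => hC ⟨k, rfl⟩⟩
    have hC0 : 0 ≤ C := le_trans (abs_nonneg _) (hC 0)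
    refine ⟨C * M, fun k => ?_⟩
    have hkey : a k * r k * δ ^ k = (a k * (δ / ρ) ^ k) * (r k * ρ ^ k) := by
      field_simp
      rw [mul_assoc _ ((δ / ρ) ^ k), ← mul_pow, show δ / ρ * ρ = δ by field_simp]
    rw [hkey, abs_mul]
    have habs : |r k * ρ ^ k| = r k * ρ ^ k := abs_of_nonneg (mul_nonneg (hr k).le (pow_nonneg hρ.le k))
    rw [habs]
    exact mul_le_mul (hC k) (hM k) (mul_nonneg (hr k).le (pow_nonneg hρ.le k)) hC0
  · intro h t
    have hlim : Tendsto (fun k : ℕ => (1 : ℝ) * (1/2 : ℝ) ^ k) atTop (nhds 0) := by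
      simpa using tendsto_pow_atTop_nhds_zero_of_lt_one (by norm_num : (0:ℝ) ≤ 1/2)
        (by norm_num : (1/2 : ℝ) < 1)
    obtain ⟨C, hC⟩ := h (fun _ => 1) (fun _ => one_pos) (fun _ _ => by norm_num)
      ⟨1/2, by norm_num, hlim⟩ (2 * (|t| + 1)) (by positivity)
    refine Summable.of_norm_bounded (g := fun k => C * (1/2 : ℝ)^k)
      (summable_geometric_two.mul_left C) (fun k => ?_)
    have hδ : (0:ℝ) < 2 * (|t| + 1) := by positivity
    have h1 : |a k| * |t| ^ k ≤ |a k| * (|t| + 1) ^ k := by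
      gcongr
      linarith
    have h2 : |a k| * (|t| + 1) ^ k = |a k * 1 * (2 * (|t| + 1)) ^ k| * (1/2 : ℝ)^k := by
      rw [abs_mul, abs_mul, abs_one, abs_of_pos (pow_pos hδ k), mul_pow, div_pow, one_pow]
      field_simp
    calc ‖a k * t ^ k‖ = |a k| * |t| ^ k := by rw [Real.norm_eq_abs, abs_mul, abs_pow]
      _ ≤ |a k| * (|t| + 1) ^ k := h1
      _ = |a k * 1 * (2 * (|t| + 1)) ^ k| * (1/2 : ℝ)^k := h2
      _ ≤ C * (1/2 : ℝ)^k := by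
          have := hC k
          gcongr
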